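/- arXiv:0912.5478 — 3 statements merged into one kernel-verified Lean document; each statement's English description precedes it below -/
import Mathlib

section
/- Let B be a building set that is flag in the combinatorial sense (every element of size ≥ 2 is a disjoint union of two elements of B), and let B₁ ⊊ B be a connected building subset that is also flag, with [n+1] ∈ B₁. Let S be a minimal (by inclusion) element of B ∖ B₁. Then S = I ⊔ J for some I, J ∈ B₁, and the closure B₂ of B₁ ∪ {S} equals B₁ ∪ {S' : S' = S₁ ⊔ S₂ with S₁, S₂ ∈ B₁, I ⊆ S₁, J ⊆ S₂}; in particular, every element of B₂ ∖ B₁ decomposes by elements of B₁ into exactly two parts. -/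
/-- A building set on a subset `X` of `[n+1]` (modeled as `Fin (n+1)`). -/
def IsBuildingSetOn {n : ℕ} (X : Finset (Fin (n + 1))) (B : Set (Finset (Fin (n + 1)))) : Prop :=
  (∀ S ∈ B, S.Nonempty ∧ S ⊆ X) ∧
  (∀ i ∈ X, ({i} : Finset (Fin (n + 1))) ∈ B) ∧
  (∀ S₁ ∈ B, ∀ S₂ ∈ B, (S₁ ∩ S₂).Nonempty → S₁ ∪ S₂ ∈ B)

/-- `D` is a partition of `S` into pairwise disjoint nonempty members of `B₀`. -/
def IsBSPartition {n : ℕ} (B₀ : Set (Finset (Fin (n + 1)))) (S : Finset (Fin (n + 1)))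
    (D : Finset (Finset (Fin (n + 1)))) : Prop :=
  (∀ T ∈ D, T ∈ B₀) ∧ (∀ T ∈ D, T.Nonempty) ∧
  (D : Set (Finset (Fin (n + 1)))).Pairwise (fun T T' => Disjoint T T') ∧
  D.sup id = S

/-- `D` is the decomposition of `S` by elements of `B₀`: a partition of `S` into members of
`B₀` with the minimal number of parts. -/
def IsDecomposition {n : ℕ} (B₀ : Set (Finset (Fin (n + 1)))) (S : Finset (Fin (n + 1)))
    (D : Finset (Finset (Fin (n + 1)))) : Prop :=
  IsBSPartition B₀ S D ∧ ∀ D', IsBSPartition B₀ S D' → D.card ≤ D'.card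

/-- `B` is connected: `[n+1] ∈ B`. -/
def IsConnectedBS {n : ℕ} (B : Set (Finset (Fin (n + 1)))) : Prop :=
  (Finset.univ : Finset (Fin (n + 1))) ∈ B

/-- `B` is flag: every member of size ≥ 2 is the disjoint union of two members. -/
def IsFlagBS {n : ℕ} (B : Set (Finset (Fin (n + 1)))) : Prop :=
  ∀ S ∈ B, 2 ≤ S.card → ∃ S₁ ∈ B, ∃ S₂ ∈ B, Disjoint S₁ S₂ ∧ S₁ ∪ S₂ = S

/-- `C` is the closure of `A`: the minimal building set containing `A`. -/
def IsClosure {n : ℕ} (A C : Set (Finset (Fin (n + 1)))) : Prop :=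
  IsBuildingSetOn Finset.univ C ∧ A ⊆ C ∧
  ∀ D, IsBuildingSetOn Finset.univ D → A ⊆ D → C ⊆ D

/-- Let `B` be a flag building set, `B₁ ⊊ B` a connected flag building subset, and `S` a
minimal element of `B ∖ B₁`. Then `S = I ⊔ J` with `I, J ∈ B₁`, the closure `B₂` of
`B₁ ∪ {S}` equals `B₁ ∪ {S₁ ⊔ S₂ : S₁, S₂ ∈ B₁, I ⊆ S₁, J ⊆ S₂}`, and every element of
`B₂ ∖ B₁` decomposes by elements of `B₁` into exactly two parts. -/
theorem stmt16 {n : ℕ} (B B₁ : Set (Finset (Fin (n + 1))))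
    (hB : IsBuildingSetOn Finset.univ B) (hBflag : IsFlagBS B)
    (hB₁ : IsBuildingSetOn Finset.univ B₁) (hB₁conn : IsConnectedBS B₁)
    (hB₁flag : IsFlagBS B₁) (hsub : B₁ ⊂ B)
    (S : Finset (Fin (n + 1))) (hS : S ∈ B \ B₁)
    (hmin : ∀ S' ∈ B \ B₁, S' ⊆ S → S' = S) :
    ∃ I ∈ B₁, ∃ J ∈ B₁, Disjoint I J ∧ I ∪ J = S ∧
      ∀ B₂, IsClosure (B₁ ∪ {S}) B₂ →
        (B₂ = B₁ ∪ {S' | ∃ S₁ ∈ B₁, ∃ S₂ ∈ B₁,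
            Disjoint S₁ S₂ ∧ S₁ ∪ S₂ = S' ∧ I ⊆ S₁ ∧ J ⊆ S₂}) ∧
        ∀ T ∈ B₂, T ∉ B₁ →
          ∀ D : Finset (Finset (Fin (n + 1))), IsDecomposition B₁ T D → D.card = 2 := by
  obtain ⟨hSB, hSnB₁⟩ := hS
  obtain ⟨hBel, hBsing, hBun⟩ := hB
  obtain ⟨hB₁el, hB₁sing, hB₁un⟩ := hB₁
  have hScard : 2 ≤ S.card := by
    by_contra h
    push_neg at h
    have h1 : 1 ≤ S.card := Finset.one_le_card.mpr (hBel S hSB).1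
    have : S.card = 1 := by omega
    obtain ⟨i, hi⟩ := Finset.card_eq_one.mp this
    exact hSnB₁ (hi ▸ hB₁sing i (Finset.mem_univ i))
  obtain ⟨I, hIB, J, hJB, hdisj, hunion⟩ := hBflag S hSB hScard
  have hIne : I.Nonempty := (hBel I hIB).1
  have hJne : J.Nonempty := (hBel J hJB).1
  have hIneqS : I ≠ S := by
    intro h
    obtain ⟨j, hj⟩ := hJne
    have hjS : j ∈ S := hunion ▸ Finset.mem_union_right I hj
    exact (Finset.disjoint_left.mp hdisj (h ▸ hjS)) hj
  have hJneqS : J ≠ S := by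
    intro h
    obtain ⟨i, hi⟩ := hIne
    have hiS : i ∈ S := hunion ▸ Finset.mem_union_left J hi
    exact (Finset.disjoint_left.mp hdisj hi) (h ▸ hiS)
  have hI₁ : I ∈ B₁ := by
    by_contra h
    exact hIneqS (hmin I ⟨hIB, h⟩ (hunion ▸ Finset.subset_union_left))
  have hJ₁ : J ∈ B₁ := by
    by_contra h
    exact hJneqS (hmin J ⟨hJB, h⟩ (hunion ▸ Finset.subset_union_right))
  refine ⟨I, hI₁, J, hJ₁, hdisj, hunion, ?_⟩
  intro B₂ hcl
  obtain ⟨hB₂bs, hsub₂, hmin₂⟩ := hcl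
  set C : Set (Finset (Fin (n + 1))) := B₁ ∪ {S' | ∃ S₁ ∈ B₁, ∃ S₂ ∈ B₁,
      Disjoint S₁ S₂ ∧ S₁ ∪ S₂ = S' ∧ I ⊆ S₁ ∧ J ⊆ S₂} with hCdef
  -- C is a building set
  have hCbs : IsBuildingSetOn Finset.univ C := by
    refine ⟨?_, ?_, ?_⟩
    · rintro T (hT | ⟨S₁, hS₁, S₂, hS₂, -, rfl, -, -⟩)
      · exact hB₁el T hT
      · exact ⟨(hB₁el S₁ hS₁).1.mono Finset.subset_union_left,
          Finset.subset_univ _⟩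
    · intro i _
      exact Or.inl (hB₁sing i (Finset.mem_univ i))
    · -- key union-closure
      have key : ∀ T ∈ B₁, ∀ S₁ ∈ B₁, ∀ S₂ ∈ B₁, Disjoint S₁ S₂ → I ⊆ S₁ → J ⊆ S₂ →
          (T ∩ (S₁ ∪ S₂)).Nonempty → T ∪ (S₁ ∪ S₂) ∈ C := by
        intro T hT S₁ hS₁ S₂ hS₂ hd hIs hJs hne
        by_cases h1 : (T ∩ S₁).Nonempty
        · have hTS₁ : T ∪ S₁ ∈ B₁ := hB₁un T hT S₁ hS₁ h1
          by_cases h2 : (T ∩ S₂).Nonempty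
          · have hTS₂ : T ∪ S₂ ∈ B₁ := hB₁un T hT S₂ hS₂ h2
            have hTne : T.Nonempty := (hB₁el T hT).1
            have : (T ∪ S₁) ∪ (T ∪ S₂) ∈ B₁ := by
              refine hB₁un _ hTS₁ _ hTS₂ ?_
              obtain ⟨t, ht⟩ := hTne
              exact ⟨t, Finset.mem_inter.mpr ⟨Finset.mem_union_left _ ht,
                Finset.mem_union_left _ ht⟩⟩
            have heq : (T ∪ S₁) ∪ (T ∪ S₂) = T ∪ (S₁ ∪ S₂) := by
              ext x; simp only [Finset.mem_union]; tauto
            exact Or.inl (heq ▸ this)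
          · have hd2 : Disjoint T S₂ := by
              rw [Finset.disjoint_iff_inter_eq_empty]
              exact Finset.not_nonempty_iff_eq_empty.mp h2
            refine Or.inr ⟨T ∪ S₁, hTS₁, S₂, hS₂, ?_, ?_, hIs.trans Finset.subset_union_right, hJs⟩
            · exact Finset.disjoint_union_left.mpr ⟨hd2, hd⟩
            · ext x; simp only [Finset.mem_union]; tauto
        · have hd1 : Disjoint S₁ T := by
            rw [Finset.disjoint_iff_inter_eq_empty, Finset.inter_comm]
            exact Finset.not_nonempty_iff_eq_empty.mp h1
          have h2 : (T ∩ S₂).Nonempty := by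
            obtain ⟨x, hx⟩ := hne
            simp only [Finset.mem_inter, Finset.mem_union] at hx
            rcases hx.2 with hx1 | hx2
            · exact absurd ⟨x, Finset.mem_inter.mpr ⟨hx.1, hx1⟩⟩ h1
            · exact ⟨x, Finset.mem_inter.mpr ⟨hx.1, hx2⟩⟩
          have hTS₂ : T ∪ S₂ ∈ B₁ := hB₁un T hT S₂ hS₂ h2
          refine Or.inr ⟨S₁, hS₁, T ∪ S₂, hTS₂, ?_, ?_, hIs, hJs.trans Finset.subset_union_right⟩
          · exact Finset.disjoint_union_right.mpr ⟨hd1, hd⟩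
          · ext x; simp only [Finset.mem_union]; tauto
      rintro T₁ (h₁ | ⟨A₁, hA₁, A₂, hA₂, hdA, rfl, hIA, hJA⟩)
          T₂ (h₂ | ⟨C₁, hC₁, C₂, hC₂, hdC, rfl, hIC, hJC⟩) hne
      · exact Or.inl (hB₁un T₁ h₁ T₂ h₂ hne)
      · exact key T₁ h₁ C₁ hC₁ C₂ hC₂ hdC hIC hJC hne
      · have := key T₂ h₂ A₁ hA₁ A₂ hA₂ hdA hIA hJA
          (by rwa [Finset.inter_comm] at hne)
        rwa [Finset.union_comm] at this
      · -- both of new form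
        have hU₁ : A₁ ∪ C₁ ∈ B₁ := by
          refine hB₁un A₁ hA₁ C₁ hC₁ ?_
          obtain ⟨i, hi⟩ := hIne
          exact ⟨i, Finset.mem_inter.mpr ⟨hIA hi, hIC hi⟩⟩
        have hU₂ : A₂ ∪ C₂ ∈ B₁ := by
          refine hB₁un A₂ hA₂ C₂ hC₂ ?_
          obtain ⟨j, hj⟩ := hJne
          exact ⟨j, Finset.mem_inter.mpr ⟨hJA hj, hJC hj⟩⟩
        have heq : (A₁ ∪ C₁) ∪ (A₂ ∪ C₂) = (A₁ ∪ A₂) ∪ (C₁ ∪ C₂) := by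
          ext x; simp only [Finset.mem_union]; tauto
        by_cases hd : Disjoint (A₁ ∪ C₁) (A₂ ∪ C₂)
        · exact Or.inr ⟨A₁ ∪ C₁, hU₁, A₂ ∪ C₂, hU₂, hd, heq,
            hIA.trans Finset.subset_union_left, hJA.trans Finset.subset_union_left⟩
        · have hnd : ((A₁ ∪ C₁) ∩ (A₂ ∪ C₂)).Nonempty := by
            rw [Finset.nonempty_iff_ne_empty]
            intro h
            exact hd (Finset.disjoint_iff_inter_eq_empty.mpr h)
          exact Or.inl (heq ▸ hB₁un _ hU₁ _ hU₂ hnd)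
  -- B₁ ∪ {S} ⊆ C
  have hsubC : B₁ ∪ {S} ⊆ C := by
    rintro T (hT | hT)
    · exact Or.inl hT
    · rw [Set.mem_singleton_iff] at hT
      exact Or.inr ⟨I, hI₁, J, hJ₁, hdisj, hT ▸ hunion, subset_rfl, subset_rfl⟩
  have hB₂C : B₂ ⊆ C := hmin₂ C hCbs hsubC
  have hCB₂ : C ⊆ B₂ := by
    rintro T (hT | ⟨S₁, hS₁, S₂, hS₂, hd, rfl, hIs, hJs⟩)
    · exact hsub₂ (Or.inl hT)
    · obtain ⟨hB₂el, hB₂sing, hB₂un⟩ := hB₂bs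
      have hS₁₂ : S₁ ∈ B₂ := hsub₂ (Or.inl hS₁)
      have hS₂₂ : S₂ ∈ B₂ := hsub₂ (Or.inl hS₂)
      have hS₂' : S ∈ B₂ := hsub₂ (Or.inr rfl)
      have h1 : S₁ ∪ S ∈ B₂ := by
        refine hB₂un S₁ hS₁₂ S hS₂' ?_
        obtain ⟨i, hi⟩ := hIne
        exact ⟨i, Finset.mem_inter.mpr ⟨hIs hi, hunion ▸ Finset.mem_union_left J hi⟩⟩
      have h2 : (S₁ ∪ S) ∪ S₂ ∈ B₂ := by
        refine hB₂un _ h1 S₂ hS₂₂ ?_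
        obtain ⟨j, hj⟩ := hJne
        exact ⟨j, Finset.mem_inter.mpr
          ⟨Finset.mem_union_right _ (hunion ▸ Finset.mem_union_right I hj), hJs hj⟩⟩
      have heq : (S₁ ∪ S) ∪ S₂ = S₁ ∪ S₂ := by
        rw [← hunion]
        ext x
        simp only [Finset.mem_union]
        constructor
        · rintro ((h | (h | h)) | h)
          · exact Or.inl h
          · exact Or.inl (hIs h)
          · exact Or.inr (hJs h)
          · exact Or.inr h
        · tauto
      exact heq ▸ h2
  have hCeq : B₂ = C := Set.Subset.antisymm hB₂C hCB₂
  refine ⟨hCeq, ?_⟩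
  intro T hT hTn D hD
  rw [hCeq] at hT
  rcases hT with hT | ⟨S₁, hS₁, S₂, hS₂, hd, rfl, hIs, hJs⟩
  · exact absurd hT hTn
  · obtain ⟨⟨hDmem, hDne, hDdis, hDsup⟩, hDmin⟩ := hD
    have hS₁ne : S₁.Nonempty := (hB₁el S₁ hS₁).1
    have hS₂ne : S₂.Nonempty := (hB₁el S₂ hS₂).1
    have hne12 : S₁ ≠ S₂ := by
      intro h
      rw [h] at hd
      exact hS₂ne.ne_empty (disjoint_self.mp hd)
    have hpart : IsBSPartition B₁ (S₁ ∪ S₂) ({S₁, S₂} : Finset (Finset (Fin (n+1)))) := by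
      refine ⟨?_, ?_, ?_, ?_⟩
      · intro U hU
        rcases Finset.mem_insert.mp hU with rfl | hU
        · exact hS₁
        · exact (Finset.mem_singleton.mp hU) ▸ hS₂
      · intro U hU
        rcases Finset.mem_insert.mp hU with rfl | hU
        · exact hS₁ne
        · exact (Finset.mem_singleton.mp hU) ▸ hS₂ne
      · intro a ha b hb hab
        simp only [Finset.coe_insert, Finset.coe_singleton, Set.mem_insert_iff,
          Set.mem_singleton_iff] at ha hb
        rcases ha with rfl | rfl <;> rcases hb with rfl | rfl
        · exact absurd rfl hab
        · exact hd
        · exact hd.symm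
        · exact absurd rfl hab
      · simp [Finset.sup_insert, Finset.sup_singleton]
    have hle : D.card ≤ 2 := by
      have := hDmin _ hpart
      rwa [Finset.card_pair hne12] at this
    have hne0 : D.card ≠ 0 := by
      intro h
      rw [Finset.card_eq_zero] at h
      rw [h] at hDsup
      simp at hDsup
      exact hS₁ne.ne_empty (by
        have : S₁ ⊆ (∅ : Finset (Fin (n+1))) := hDsup ▸ Finset.subset_union_left
        exact Finset.subset_empty.mp this)
    have hne1 : D.card ≠ 1 := by
      intro h
      obtain ⟨U, hU⟩ := Finset.card_eq_one.mp h
      rw [hU] at hDsup hDmem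
      simp only [Finset.sup_singleton, id] at hDsup
      exact hTn (hDsup ▸ hDmem U (Finset.mem_singleton_self U))
    omega
end

section
/- Let B₁ ⊊ B be connected building sets on [n+1] both flag (every element of size ≥ 2 splits as a disjoint union of two elements). Then there is a chain of flag connected building sets B₁ = C₀ ⊊ C₁ ⊊ ... ⊊ C_m = B such that every element of C_{i+1} ∖ C_i decomposes by elements of C_i into exactly two parts. -/
lemma aux_two_le_card {n : ℕ} {C : Set (Finset (Fin (n + 1)))}
    (hC : IsBuildingSetOn Finset.univ C) {S : Finset (Fin (n + 1))}
    (hSne : S.Nonempty) (hSC : S ∉ C) : 2 ≤ S.card := by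
  rcases Nat.lt_or_ge S.card 2 with h | h
  · have h1 : S.card = 1 := le_antisymm (by omega) (Finset.one_le_card.mpr hSne)
    obtain ⟨a, rfl⟩ := Finset.card_eq_one.mp h1
    exact absurd (hC.2.1 a (Finset.mem_univ a)) hSC
  · exact h

lemma aux_exists_split {n : ℕ} (B C : Set (Finset (Fin (n + 1))))
    (hB : IsBuildingSetOn Finset.univ B) (hBflag : IsFlagBS B)
    (hC : IsBuildingSetOn Finset.univ C) :
    ∀ (k : ℕ) (S : Finset (Fin (n + 1))), S.card ≤ k → S ∈ B → S ∉ C →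
      ∃ S' P Q, S' ∈ B ∧ S' ∉ C ∧ P ∈ C ∧ Q ∈ C ∧ Disjoint P Q ∧ P ∪ Q = S' := by
  intro k
  induction k with
  | zero =>
      intro S hcard hSB hSC
      have hne := (hB.1 S hSB).1
      rw [Nat.le_zero, Finset.card_eq_zero] at hcard
      simp [hcard] at hne
  | succ k ih =>
      intro S hcard hSB hSC
      have h2 := aux_two_le_card hC (hB.1 S hSB).1 hSC
      obtain ⟨P, hP, Q, hQ, hdisj, hunion⟩ := hBflag S hSB h2
      have hPne := (hB.1 P hP).1
      have hQne := (hB.1 Q hQ).1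
      have hPS : P ⊂ S := by
        constructor
        · rw [← hunion]; exact Finset.subset_union_left
        · intro hsub
          obtain ⟨x, hx⟩ := hQne
          have hxS : x ∈ S := by rw [← hunion]; exact Finset.mem_union_right _ hx
          exact (Finset.disjoint_right.mp hdisj hx) (hsub hxS)
      have hQS : Q ⊂ S := by
        constructor
        · rw [← hunion]; exact Finset.subset_union_right
        · intro hsub
          obtain ⟨x, hx⟩ := hPne
          have hxS : x ∈ S := by rw [← hunion]; exact Finset.mem_union_left _ hx
          exact (Finset.disjoint_left.mp hdisj hx) (hsub hxS)
      by_cases hPC : P ∈ C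
      · by_cases hQC : Q ∈ C
        · exact ⟨S, P, Q, hSB, hSC, hPC, hQC, hdisj, hunion⟩
        · exact ih Q (by have := Finset.card_lt_card hQS; omega) hQ hQC
      · exact ih P (by have := Finset.card_lt_card hPS; omega) hP hPC

lemma aux_main_step {n : ℕ} (B C : Set (Finset (Fin (n + 1))))
    (hB : IsBuildingSetOn Finset.univ B) (hBflag : IsFlagBS B)
    (hC : IsBuildingSetOn Finset.univ C) (hCB : C ⊆ B)
    {S₀ : Finset (Fin (n + 1))} (hS₀B : S₀ ∈ B) (hS₀C : S₀ ∉ C) :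
    ∃ S P Q, S ∈ B ∧ S ∉ C ∧ P ∈ C ∧ Q ∈ C ∧ Disjoint P Q ∧ P ∪ Q = S ∧
      ∀ T ∈ C, (T ∩ S).Nonempty → T ⊆ S ∨ S ∪ T ∈ C := by
  classical
  set W : Set (Finset (Fin (n + 1))) :=
    {S | (S ∈ B ∧ S ∉ C) ∧ ∃ P Q, P ∈ C ∧ Q ∈ C ∧ Disjoint P Q ∧ P ∪ Q = S} with hW
  have hWne : W.Nonempty := by
    obtain ⟨S', P, Q, h1, h2, h3, h4, h5, h6⟩ :=
      aux_exists_split B C hB hBflag hC S₀.card S₀ le_rfl hS₀B hS₀C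
    exact ⟨S', ⟨h1, h2⟩, P, Q, h3, h4, h5, h6⟩
  obtain ⟨S, hSW, hmax⟩ := Set.Finite.exists_maximalFor Finset.card W (Set.toFinite W) hWne
  obtain ⟨⟨hSB, hSC⟩, P, Q, hP, hQ, hdisjPQ, hunion⟩ := hSW
  refine ⟨S, P, Q, hSB, hSC, hP, hQ, hdisjPQ, hunion, ?_⟩
  intro T hT hint
  by_cases hTS : T ⊆ S
  · exact Or.inl hTS
  right
  by_contra hSTC
  have hSTB : S ∪ T ∈ B := by
    apply hB.2.2 S hSB T (hCB hT)
    obtain ⟨x, hx⟩ := hint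
    simp only [Finset.mem_inter] at hx
    exact ⟨x, Finset.mem_inter.mpr ⟨hx.2, hx.1⟩⟩
  have hcard : S.card < (S ∪ T).card := by
    apply Finset.card_lt_card
    constructor
    · exact Finset.subset_union_left
    · intro hsub
      obtain ⟨x, hx, hxS⟩ := Finset.not_subset.mp hTS
      exact hxS (hsub (Finset.mem_union_right _ hx))
  have key : S ∪ T ∉ W := by
    intro hmem
    have := hmax (j := S ∪ T) hmem (le_of_lt hcard)
    omega
  have hmeet : (T ∩ P).Nonempty ∨ (T ∩ Q).Nonempty := by
    obtain ⟨x, hx⟩ := hint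
    simp only [Finset.mem_inter] at hx
    have hxPQ : x ∈ P ∪ Q := by rw [hunion]; exact hx.2
    rcases Finset.mem_union.mp hxPQ with h | h
    · exact Or.inl ⟨x, Finset.mem_inter.mpr ⟨hx.1, h⟩⟩
    · exact Or.inr ⟨x, Finset.mem_inter.mpr ⟨hx.1, h⟩⟩
  by_cases hTP : (T ∩ P).Nonempty
  · have h1 : P ∪ T ∈ C := by
      apply hC.2.2 P hP T hT
      obtain ⟨x, hx⟩ := hTP
      simp only [Finset.mem_inter] at hx
      exact ⟨x, Finset.mem_inter.mpr ⟨hx.2, hx.1⟩⟩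
    by_cases hTQ : (T ∩ Q).Nonempty
    · have h2 : (P ∪ T) ∪ Q ∈ C := by
        apply hC.2.2 _ h1 Q hQ
        obtain ⟨x, hx⟩ := hTQ
        simp only [Finset.mem_inter] at hx
        exact ⟨x, Finset.mem_inter.mpr ⟨Finset.mem_union_right _ hx.1, hx.2⟩⟩
      have heq : (P ∪ T) ∪ Q = S ∪ T := by rw [← hunion]; ext x; simp; tauto
      exact hSTC (heq ▸ h2)
    · have hdisjT : Disjoint T Q := Finset.disjoint_left.mpr
        (fun {x} hxT hxQ => hTQ ⟨x, Finset.mem_inter.mpr ⟨hxT, hxQ⟩⟩)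
      have hdisj2 : Disjoint (P ∪ T) Q := Finset.disjoint_union_left.mpr ⟨hdisjPQ, hdisjT⟩
      have heq : (P ∪ T) ∪ Q = S ∪ T := by rw [← hunion]; ext x; simp; tauto
      exact key ⟨⟨hSTB, hSTC⟩, P ∪ T, Q, h1, hQ, hdisj2, heq⟩
  · have hTQ := hmeet.resolve_left hTP
    have h1 : Q ∪ T ∈ C := by
      apply hC.2.2 Q hQ T hT
      obtain ⟨x, hx⟩ := hTQ
      simp only [Finset.mem_inter] at hx
      exact ⟨x, Finset.mem_inter.mpr ⟨hx.2, hx.1⟩⟩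
    have hdisjT : Disjoint P T := Finset.disjoint_right.mpr
      (fun {x} hxT hxP => hTP ⟨x, Finset.mem_inter.mpr ⟨hxT, hxP⟩⟩)
    have hdisj2 : Disjoint P (Q ∪ T) := Finset.disjoint_union_right.mpr ⟨hdisjPQ, hdisjT⟩
    have heq : P ∪ (Q ∪ T) = S ∪ T := by rw [← hunion]; ext x; simp only [Finset.mem_union]; tauto
    exact key ⟨⟨hSTB, hSTC⟩, P, Q ∪ T, hP, h1, hdisj2, heq⟩

lemma aux_insert_props {n : ℕ} {C : Set (Finset (Fin (n + 1)))} {S P Q : Finset (Fin (n + 1))}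
    (hC : IsBuildingSetOn Finset.univ C) (hCconn : IsConnectedBS C) (hCflag : IsFlagBS C)
    (hSne : S.Nonempty)
    (hP : P ∈ C) (hQ : Q ∈ C) (hdisj : Disjoint P Q) (hunion : P ∪ Q = S)
    (hclose : ∀ T ∈ C, (T ∩ S).Nonempty → T ⊆ S ∨ S ∪ T ∈ C) :
    IsBuildingSetOn Finset.univ (insert S C) ∧ IsConnectedBS (insert S C) ∧
      IsFlagBS (insert S C) := by
  refine ⟨⟨?_, ?_, ?_⟩, ?_, ?_⟩
  · intro T hT
    rcases Set.mem_insert_iff.mp hT with rfl | hT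
    · exact ⟨hSne, Finset.subset_univ _⟩
    · exact hC.1 T hT
  · intro i hi; exact Set.mem_insert_iff.mpr (Or.inr (hC.2.1 i hi))
  · intro T₁ h₁ T₂ h₂ hint
    rcases Set.mem_insert_iff.mp h₁ with h₁ | h₁ <;> rcases Set.mem_insert_iff.mp h₂ with h₂ | h₂
    · rw [h₁, h₂, Finset.union_self]; exact Set.mem_insert _ C
    · rw [h₁] at hint ⊢
      rcases hclose T₂ h₂ (by rwa [Finset.inter_comm] at hint) with hsub | hmem
      · rw [Finset.union_eq_left.mpr hsub]; exact Set.mem_insert _ C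
      · exact Set.mem_insert_iff.mpr (Or.inr hmem)
    · rw [h₂] at hint ⊢
      rcases hclose T₁ h₁ hint with hsub | hmem
      · rw [Finset.union_eq_right.mpr hsub]; exact Set.mem_insert _ C
      · rw [Finset.union_comm]; exact Set.mem_insert_iff.mpr (Or.inr hmem)
    · exact Set.mem_insert_iff.mpr (Or.inr (hC.2.2 T₁ h₁ T₂ h₂ hint))
  · exact Set.mem_insert_iff.mpr (Or.inr hCconn)
  · intro T hT h2
    rcases Set.mem_insert_iff.mp hT with rfl | hT
    · exact ⟨P, Set.mem_insert_iff.mpr (Or.inr hP), Q,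
        Set.mem_insert_iff.mpr (Or.inr hQ), hdisj, hunion⟩
    · obtain ⟨A, hA, B', hB', h⟩ := hCflag T hT h2
      exact ⟨A, Set.mem_insert_iff.mpr (Or.inr hA), B',
        Set.mem_insert_iff.mpr (Or.inr hB'), h⟩

lemma aux_decomp_two {n : ℕ} {C : Set (Finset (Fin (n + 1)))} {S P Q : Finset (Fin (n + 1))}
    (hSC : S ∉ C) (hP : P ∈ C) (hQ : Q ∈ C) (hPne : P.Nonempty) (hQne : Q.Nonempty)
    (hdisj : Disjoint P Q) (hunion : P ∪ Q = S) :
    ∀ D, IsDecomposition C S D → D.card = 2 := by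
  intro D hD
  obtain ⟨⟨hmem, hne, hpw, hsup⟩, hmin⟩ := hD
  have hPQne : P ≠ Q := by
    rintro rfl
    exact hPne.ne_empty (by simpa using disjoint_self.mp hdisj)
  have hpart : IsBSPartition C S {P, Q} := by
    refine ⟨?_, ?_, ?_, ?_⟩
    · intro T hT
      rcases Finset.mem_insert.mp hT with rfl | hT
      · exact hP
      · rw [Finset.mem_singleton.mp hT]; exact hQ
    · intro T hT
      rcases Finset.mem_insert.mp hT with rfl | hT
      · exact hPne
      · rw [Finset.mem_singleton.mp hT]; exact hQne
    · intro a ha b hb hab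
      simp only [Finset.coe_insert, Finset.coe_singleton, Set.mem_insert_iff,
        Set.mem_singleton_iff] at ha hb
      rcases ha with rfl | rfl <;> rcases hb with rfl | rfl
      · exact absurd rfl hab
      · exact hdisj
      · exact hdisj.symm
      · exact absurd rfl hab
    · rw [Finset.sup_insert, Finset.sup_singleton]; exact hunion
  have hle : D.card ≤ 2 := by
    have h := hmin {P, Q} hpart
    rwa [Finset.card_insert_of_notMem (by simpa using hPQne), Finset.card_singleton] at h
  have hge : 2 ≤ D.card := by
    by_contra hlt
    push_neg at hlt
    have : D.card = 0 ∨ D.card = 1 := by omega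
    rcases this with h0 | h1
    · rw [Finset.card_eq_zero] at h0
      subst h0
      rw [Finset.sup_empty] at hsup
      have hSne : S.Nonempty := by
        obtain ⟨x, hx⟩ := hPne
        exact ⟨x, by rw [← hunion]; exact Finset.mem_union_left _ hx⟩
      rw [← hsup] at hSne
      simp at hSne
    · obtain ⟨T, hT⟩ := Finset.card_eq_one.mp h1
      subst hT
      rw [Finset.sup_singleton] at hsup
      exact hSC (hsup ▸ hmem T (Finset.mem_singleton_self T))
  omega

lemma aux_chain {n : ℕ} (B : Set (Finset (Fin (n + 1))))
    (hB : IsBuildingSetOn Finset.univ B) (hBflag : IsFlagBS B) :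
    ∀ (k : ℕ) (C : Set (Finset (Fin (n + 1)))), (B \ C).ncard ≤ k →
      IsBuildingSetOn Finset.univ C → IsConnectedBS C → IsFlagBS C → C ⊆ B →
      ∃ (m : ℕ) (Cf : ℕ → Set (Finset (Fin (n + 1)))),
        Cf 0 = C ∧ Cf m = B ∧
        (∀ i ≤ m, IsBuildingSetOn Finset.univ (Cf i) ∧ IsConnectedBS (Cf i) ∧ IsFlagBS (Cf i)) ∧
        ∀ i < m, Cf i ⊂ Cf (i + 1) ∧
          ∀ T ∈ Cf (i + 1) \ Cf i,
            ∀ D : Finset (Finset (Fin (n + 1))), IsDecomposition (Cf i) T D → D.card = 2 := by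
  intro k
  induction k with
  | zero =>
      intro C hcard hC hCconn hCflag hCB
      have hBC : C = B := by
        apply Set.Subset.antisymm hCB
        intro x hx
        by_contra hxC
        have hne : (B \ C).Nonempty := ⟨x, hx, hxC⟩
        have := Set.ncard_pos (Set.toFinite (B \ C)) |>.mpr hne
        omega
      exact ⟨0, fun _ => C, rfl, hBC, fun i _ => ⟨hC, hCconn, hCflag⟩,
        fun i h => absurd h (Nat.not_lt_zero i)⟩
  | succ k ih =>
      intro C hcard hC hCconn hCflag hCB
      by_cases hCB' : B ⊆ C
      · exact ⟨0, fun _ => C, rfl, Set.Subset.antisymm hCB hCB',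
          fun i _ => ⟨hC, hCconn, hCflag⟩, fun i h => absurd h (Nat.not_lt_zero i)⟩
      · obtain ⟨S₀, hS₀B, hS₀C⟩ := Set.not_subset.mp hCB'
        obtain ⟨S, P, Q, hSB, hSC, hP, hQ, hdisj, hunion, hclose⟩ :=
          aux_main_step B C hB hBflag hC hCB hS₀B hS₀C
        have hSne := (hB.1 S hSB).1
        have hPne := (hC.1 P hP).1
        have hQne := (hC.1 Q hQ).1
        obtain ⟨hC', hCconn', hCflag'⟩ :=
          aux_insert_props hC hCconn hCflag hSne hP hQ hdisj hunion hclose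
        have hdiffeq : B \ insert S C = (B \ C) \ {S} := by
          ext x; simp only [Set.mem_diff, Set.mem_insert_iff, Set.mem_singleton_iff]; tauto
        have hcard' : (B \ insert S C).ncard ≤ k := by
          rw [hdiffeq]
          have h1 : ((B \ C) \ {S}).ncard < (B \ C).ncard :=
            Set.ncard_diff_singleton_lt_of_mem ⟨hSB, hSC⟩ (Set.toFinite _)
          omega
        have hsub' : insert S C ⊆ B := Set.insert_subset hSB hCB
        obtain ⟨m, D, hD0, hDm, hDall, hDstep⟩ :=
          ih (insert S C) hcard' hC' hCconn' hCflag' hsub'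
        refine ⟨m + 1, fun i => if i = 0 then C else D (i - 1), by simp, by simp [hDm], ?_, ?_⟩
        · intro i hi
          match i with
          | 0 => simpa using ⟨hC, hCconn, hCflag⟩
          | j + 1 =>
              simpa using hDall j (by omega)
        · intro i hi
          match i with
          | 0 =>
              constructor
              · simpa [hD0] using Set.ssubset_insert hSC
              · intro T hT Dec hDec
                have hT1 : T ∈ insert S C := by
                  have := hT.1; simpa [hD0] using this
                have hT2 : T ∉ C := by
                  have := hT.2; simpa using this
                have hTeq : T = S := by
                  rcases Set.mem_insert_iff.mp hT1 with h | h
                  · exact h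
                  · exact absurd h hT2
                subst hTeq
                apply aux_decomp_two hSC hP hQ hPne hQne hdisj hunion
                simpa using hDec
          | j + 1 =>
              have h := hDstep j (by omega)
              constructor
              · simpa using h.1
              · intro T hT Dec hDec
                apply h.2 T (by simpa using hT) Dec (by simpa using hDec)

/-- If `B₁ ⊊ B` are connected flag building sets on `[n+1]`, there is a chain of flag
connected building sets `B₁ = C₀ ⊊ C₁ ⊊ … ⊊ C_m = B` such that every element of
`C_{i+1} ∖ C_i` decomposes by elements of `C_i` into exactly two parts. -/
theorem stmt17 {n : ℕ} (B B₁ : Set (Finset (Fin (n + 1))))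
    (hB : IsBuildingSetOn Finset.univ B) (hBconn : IsConnectedBS B) (hBflag : IsFlagBS B)
    (hB₁ : IsBuildingSetOn Finset.univ B₁) (hB₁conn : IsConnectedBS B₁)
    (hB₁flag : IsFlagBS B₁) (hsub : B₁ ⊂ B) :
    ∃ (m : ℕ) (C : ℕ → Set (Finset (Fin (n + 1)))),
      C 0 = B₁ ∧ C m = B ∧
      (∀ i ≤ m, IsBuildingSetOn Finset.univ (C i) ∧ IsConnectedBS (C i) ∧ IsFlagBS (C i)) ∧
      ∀ i < m, C i ⊂ C (i + 1) ∧
        ∀ T ∈ C (i + 1) \ C i,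
          ∀ D : Finset (Finset (Fin (n + 1))), IsDecomposition (C i) T D → D.card = 2 := by
  exact aux_chain B hB hBflag (B \ B₁).ncard B₁ le_rfl hB₁ hB₁conn hB₁flag hsub.1
end

section
/- Let B be a connected building set on [n+1], and for S ∈ B ∖ {[n+1]} let l_S ∈ ℝⁿ be defined recursively from a cube building subset B₀ (for S ∈ B₀ the l_S are standard cube normals ±e_i, and for S with decomposition S = S₁ ⊔ S₂ by elements of a previous building set, l_S = l_{S₁} + l_{S₂}). If S', S'' ∈ B are disjoint and S' ⊔ S'' ∉ B, then the supports of l_{S'} and l_{S''} are disjoint; consequently all coordinates of every l_S lie in {−1, 0, 1}. -/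
lemma aux_union18 {n : ℕ} {Bm : Set (Finset (Fin (n + 1)))}
    (hbs3 : ∀ S₁ ∈ Bm, ∀ S₂ ∈ Bm, (S₁ ∩ S₂).Nonempty → S₁ ∪ S₂ ∈ Bm)
    {S₁ S₂ T T' : Finset (Fin (n + 1))} (hS₁ : S₁ ∈ Bm) (hS₂ : S₂ ∈ Bm)
    (hT : T ⊆ S₁) (hT' : T' ⊆ S₂) (hTn : T.Nonempty) (hT'n : T'.Nonempty)
    (hTT : T ∪ T' ∈ Bm) : S₁ ∪ S₂ ∈ Bm := by
  obtain ⟨t, ht⟩ := hTn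
  obtain ⟨t', ht'⟩ := hT'n
  have h1 : S₁ ∪ (T ∪ T') ∈ Bm :=
    hbs3 _ hS₁ _ hTT ⟨t, Finset.mem_inter.mpr ⟨hT ht, Finset.mem_union_left _ ht⟩⟩
  have h2 : (S₁ ∪ (T ∪ T')) ∪ S₂ ∈ Bm :=
    hbs3 _ h1 _ hS₂ ⟨t', Finset.mem_inter.mpr
      ⟨Finset.mem_union_right _ (Finset.mem_union_right _ ht'),
        hT' ht'⟩⟩
  have heq : (S₁ ∪ (T ∪ T')) ∪ S₂ = S₁ ∪ S₂ := by
    apply Finset.Subset.antisymm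
    · exact Finset.union_subset
        (Finset.union_subset Finset.subset_union_left
          (Finset.union_subset (hT.trans Finset.subset_union_left)
            (hT'.trans Finset.subset_union_right)))
        Finset.subset_union_right
    · exact Finset.union_subset
        (Finset.subset_union_left.trans Finset.subset_union_left)
        Finset.subset_union_right
  rwa [heq] at h2

/-- Let `B 0 ⊆ B 1 ⊆ … ⊆ B M` be a chain of connected building sets on `[n+1]`, where `B 0`
corresponds to a cube with facet normals `l S ∈ {±e₁, …, ±e_n}` satisfying the base support
property, and at each step `B j = B (j-1) ∪ {S_j}` with `S_j = S_{j₁} ⊔ S_{j₂}`,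
`S_{j₁}, S_{j₂} ∈ B (j-1)`, and `l S_j = l S_{j₁} + l S_{j₂}`. If `S', S'' ∈ B M` are
disjoint with `S' ⊔ S'' ∉ B M` then `l S'` and `l S''` have disjoint supports; consequently
all coordinates of each `l S` lie in `{-1, 0, 1}`. -/
theorem stmt18 {n : ℕ} (M : ℕ) (B : ℕ → Set (Finset (Fin (n + 1))))
    (l : Finset (Fin (n + 1)) → (Fin n → ℝ))
    (hbs : ∀ j ≤ M, IsBuildingSetOn Finset.univ (B j) ∧ IsConnectedBS (B j))
    (hcube : ∀ S ∈ B 0, S ≠ Finset.univ →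
      ∃ i : Fin n, l S = Pi.single i (1 : ℝ) ∨ l S = Pi.single i (-1 : ℝ))
    (hbase : ∀ S' ∈ B 0, ∀ S'' ∈ B 0, S' ≠ Finset.univ → S'' ≠ Finset.univ →
      Disjoint S' S'' → S' ∪ S'' ∉ B 0 → ∀ i, l S' i = 0 ∨ l S'' i = 0)
    (hstep : ∀ j, 1 ≤ j → j ≤ M →
      ∃ Sj, Sj ∉ B (j - 1) ∧ B j = B (j - 1) ∪ {Sj} ∧
        ∃ S₁ ∈ B (j - 1), ∃ S₂ ∈ B (j - 1),
          Disjoint S₁ S₂ ∧ S₁ ∪ S₂ = Sj ∧ l Sj = l S₁ + l S₂) :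
    (∀ S' ∈ B M, ∀ S'' ∈ B M, S' ≠ Finset.univ → S'' ≠ Finset.univ →
      Disjoint S' S'' → S' ∪ S'' ∉ B M → ∀ i, l S' i = 0 ∨ l S'' i = 0) ∧
    (∀ S ∈ B M, S ≠ Finset.univ → ∀ i, l S i ∈ ({-1, 0, 1} : Set ℝ)) := by

  classical
  -- monotonicity of the chain
  have hsub : ∀ j, 1 ≤ j → j ≤ M → B (j - 1) ⊆ B j := by
    intro j h1 h2
    obtain ⟨Sj, -, hBj, -⟩ := hstep j h1 h2
    rw [hBj]; exact Set.subset_union_left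
  have hmono0 : ∀ j, j ≤ M → B 0 ⊆ B j := by
    intro j hj
    induction j with
    | zero => exact subset_rfl
    | succ k ih =>
      have h := hsub (k + 1) (Nat.le_add_left 1 k) hj
      simp only [Nat.add_sub_cancel] at h
      exact (ih (Nat.le_of_succ_le hj)).trans h
  -- key invariant
  have key : ∀ m, m ≤ M → ∀ S ∈ B m, S ≠ Finset.univ →
      ∃ D : Finset (Finset (Fin (n + 1))),
        (∀ T ∈ D, T ∈ B 0 ∧ T ⊆ S ∧ T.Nonempty) ∧
        (∀ T ∈ D, ∀ T' ∈ D, T ≠ T' → Disjoint T T' ∧ T ∪ T' ∉ B 0) ∧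
        l S = ∑ T ∈ D, l T := by
    intro m
    induction m with
    | zero =>
      intro _ S hS _
      refine ⟨{S}, ?_, ?_, by simp⟩
      · intro T hT
        rw [Finset.mem_singleton] at hT
        subst hT
        exact ⟨hS, Finset.Subset.refl _, ((hbs 0 (Nat.zero_le M)).1.1 _ hS).1⟩
      · intro T hT T' hT' hne
        rw [Finset.mem_singleton] at hT hT'
        exact absurd (hT.trans hT'.symm) hne
    | succ k ih =>
      intro hk S hS hSu
      have hkM : k ≤ M := Nat.le_of_succ_le hk
      obtain ⟨Sj, hSjnot, hBeq, S₁, hS₁, S₂, hS₂, hdisj, hunion, hlsum⟩ :=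
        hstep (k + 1) (Nat.le_add_left 1 k) hk
      simp only [Nat.add_sub_cancel] at hSjnot hBeq hS₁ hS₂ hlsum
      rw [hBeq] at hS
      rcases hS with hS | hS
      · exact ih hkM S hS hSu
      · -- S = Sj
        rw [Set.mem_singleton_iff] at hS
        subst hS
        have hS₁n : S₁.Nonempty := ((hbs k hkM).1.1 S₁ hS₁).1
        have hS₂n : S₂.Nonempty := ((hbs k hkM).1.1 S₂ hS₂).1
        have hS₁u : S₁ ≠ Finset.univ := by
          intro h
          obtain ⟨x, hx⟩ := hS₂n
          exact (Finset.disjoint_left.mp hdisj (h ▸ Finset.mem_univ x)) hx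
        have hS₂u : S₂ ≠ Finset.univ := by
          intro h
          obtain ⟨x, hx⟩ := hS₁n
          exact (Finset.disjoint_left.mp hdisj.symm (h ▸ Finset.mem_univ x)) hx
        obtain ⟨D₁, hD₁mem, hD₁pair, hD₁sum⟩ := ih hkM S₁ hS₁ hS₁u
        obtain ⟨D₂, hD₂mem, hD₂pair, hD₂sum⟩ := ih hkM S₂ hS₂ hS₂u
        have hDdisj : Disjoint D₁ D₂ := by
          rw [Finset.disjoint_left]
          intro T hT1 hT2
          obtain ⟨x, hx⟩ := (hD₁mem T hT1).2.2
          exact Finset.disjoint_left.mp hdisj ((hD₁mem T hT1).2.1 hx)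
            ((hD₂mem T hT2).2.1 hx)
        -- cross condition: T ∈ D₁, T' ∈ D₂ ⇒ disjoint and union ∉ B 0
        have hcross : ∀ T ∈ D₁, ∀ T' ∈ D₂, Disjoint T T' ∧ T ∪ T' ∉ B 0 := by
          intro T hT T' hT'
          obtain ⟨hTB, hTsub, hTn⟩ := hD₁mem T hT
          obtain ⟨hT'B, hT'sub, hT'n⟩ := hD₂mem T' hT'
          refine ⟨hdisj.mono hTsub hT'sub, fun hTT => ?_⟩
          have : S₁ ∪ S₂ ∈ B k :=
            aux_union18 (hbs k hkM).1.2.2 hS₁ hS₂ hTsub hT'sub hTn hT'n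
              (hmono0 k hkM hTT)
          rw [hunion] at this
          exact hSjnot this
        refine ⟨D₁ ∪ D₂, ?_, ?_, ?_⟩
        · intro T hT
          rcases Finset.mem_union.mp hT with h | h
          · obtain ⟨a, b, c⟩ := hD₁mem T h
            exact ⟨a, b.trans (hunion ▸ Finset.subset_union_left), c⟩
          · obtain ⟨a, b, c⟩ := hD₂mem T h
            exact ⟨a, b.trans (hunion ▸ Finset.subset_union_right), c⟩
        · intro T hT T' hT' hne
          rcases Finset.mem_union.mp hT with h | h <;>
            rcases Finset.mem_union.mp hT' with h' | h'
          · exact hD₁pair T h T' h' hne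
          · exact hcross T h T' h'
          · obtain ⟨a, b⟩ := hcross T' h' T h
            exact ⟨a.symm, by rwa [Finset.union_comm]⟩
          · exact hD₂pair T h T' h' hne
        · rw [Finset.sum_union hDdisj, hlsum, hD₁sum, hD₂sum]
  -- unions of base parts of disjoint non-unitable sets are not in B 0
  have hnotB0 : ∀ S' ∈ B M, ∀ S'' ∈ B M, Disjoint S' S'' → S' ∪ S'' ∉ B M →
      ∀ T, T ⊆ S' → T.Nonempty → ∀ T', T' ⊆ S'' → T'.Nonempty → T ∪ T' ∉ B 0 := by
    intro S' hS' S'' hS'' _ hnu T hT hTn T' hT' hT'n hTT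
    exact hnu (aux_union18 (hbs M le_rfl).1.2.2 hS' hS'' hT hT' hTn hT'n
      (hmono0 M le_rfl hTT))
  have hval : ∀ T ∈ B 0, T ≠ Finset.univ → ∀ i, l T i ∈ ({-1, 0, 1} : Set ℝ) := by
    intro T hT hTu i
    obtain ⟨i₀, h | h⟩ := hcube T hT hTu <;> rw [h] <;>
      rcases eq_or_ne i i₀ with h' | h' <;>
      simp [Pi.single_apply, h']
  constructor
  · intro S' hS' S'' hS'' hne' hne'' hd hnu i
    obtain ⟨D', hD'mem, -, hD'sum⟩ := key M le_rfl S' hS' hne'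
    obtain ⟨D'', hD''mem, -, hD''sum⟩ := key M le_rfl S'' hS'' hne''
    have hTu : ∀ T ∈ D', T ≠ Finset.univ := by
      intro T hT h
      exact hne' (Finset.univ_subset_iff.mp (h ▸ (hD'mem T hT).2.1))
    have hT'u : ∀ T ∈ D'', T ≠ Finset.univ := by
      intro T hT h
      exact hne'' (Finset.univ_subset_iff.mp (h ▸ (hD''mem T hT).2.1))
    by_cases h0 : ∀ T ∈ D', l T i = 0
    · left
      rw [hD'sum, Finset.sum_apply]
      exact Finset.sum_eq_zero h0
    · right
      push_neg at h0
      obtain ⟨T₀, hT₀, hT₀ne⟩ := h0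
      rw [hD''sum, Finset.sum_apply]
      apply Finset.sum_eq_zero
      intro T' hT'
      have hb := hbase T₀ (hD'mem T₀ hT₀).1 T' (hD''mem T' hT').1
        (hTu T₀ hT₀) (hT'u T' hT')
        (hd.mono (hD'mem T₀ hT₀).2.1 (hD''mem T' hT').2.1)
        (hnotB0 S' hS' S'' hS'' hd hnu T₀ (hD'mem T₀ hT₀).2.1 (hD'mem T₀ hT₀).2.2
          T' (hD''mem T' hT').2.1 (hD''mem T' hT').2.2) i
      rcases hb with h | h
      · exact absurd h hT₀ne
      · exact h
  · intro S hS hSu i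
    obtain ⟨D, hDmem, hDpair, hDsum⟩ := key M le_rfl S hS hSu
    have hTu : ∀ T ∈ D, T ≠ Finset.univ := by
      intro T hT h
      exact hSu (Finset.univ_subset_iff.mp (h ▸ (hDmem T hT).2.1))
    rw [hDsum, Finset.sum_apply]
    by_cases h0 : ∀ T ∈ D, l T i = 0
    · rw [Finset.sum_eq_zero h0]
      exact Or.inr (Or.inl rfl)
    · push_neg at h0
      obtain ⟨T₀, hT₀, hT₀ne⟩ := h0
      rw [Finset.sum_eq_single_of_mem T₀ hT₀ ?_]
      · exact hval T₀ (hDmem T₀ hT₀).1 (hTu T₀ hT₀) i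
      · intro T hT hne
        have hp := hDpair T hT T₀ hT₀ hne
        rcases hbase T (hDmem T hT).1 T₀ (hDmem T₀ hT₀).1 (hTu T hT) (hTu T₀ hT₀)
          hp.1 hp.2 i with h | h
        · exact h
        · exact absurd h hT₀ne
end
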